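/- The Hamiltonians h₁ and h₂ of the case (ii) Hénon–Heiles system Poisson-commute: {h₁, h₂} = 0, where the Poisson bracket is the canonical one in coordinates (q₁, q₂, p₁, p₂). -/

import Mathlib

/-- Derivative of a quartic polynomial. -/
lemma polyD (A B C D E x : ℝ) :
    HasDerivAt (fun s : ℝ => A * s ^ 4 + B * s ^ 3 + C * s ^ 2 + D * s + E)
      (4 * A * x ^ 3 + 3 * B * x ^ 2 + 2 * C * x + D) x := by
  have h := (((((hasDerivAt_pow 4 x).const_mul A).add
      ((hasDerivAt_pow 3 x).const_mul B)).add
      ((hasDerivAt_pow 2 x).const_mul C)).add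
      ((hasDerivAt_id x).const_mul D)).add_const E
  refine h.congr_deriv ?_
  push_cast
  ring

/-- Derivative of a quartic polynomial plus `K / s ^ 2`. -/
lemma fullD (A B C D E K x : ℝ) (hx : x ≠ 0) :
    HasDerivAt (fun s : ℝ => A * s ^ 4 + B * s ^ 3 + C * s ^ 2 + D * s + E + K / s ^ 2)
      (4 * A * x ^ 3 + 3 * B * x ^ 2 + 2 * C * x + D - 2 * K / x ^ 3) x := by
  have hd := (polyD A B C D E x).add
    ((hasDerivAt_const x K).div (hasDerivAt_pow 2 x) (pow_ne_zero 2 hx))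
  refine hd.congr_deriv ?_
  field_simp
  ring

/-- The two Hamiltonians of the case (ii) Hénon–Heiles system Poisson-commute:
`{h₁, h₂} = 0` for the canonical Poisson bracket, expressed via partial
derivatives in the coordinates (q₁, q₂, p₁, p₂). -/
theorem henon_heiles_commuting (a c m : ℝ)
    (h1 h2 : ℝ → ℝ → ℝ → ℝ → ℝ)
    (hh1 : ∀ q1 q2 p1 p2, h1 q1 q2 p1 p2 =
      (1 / 2) * (p1 ^ 2 + p2 ^ 2) + q2 ^ 3 + (1 / 2) * q2 * q1 ^ 2
        - (1 / 2) * a * q1 ^ 2 + c * q2 - m ^ 2 / (2 * q1 ^ 2))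
    (hh2 : ∀ q1 q2 p1 p2, h2 q1 q2 p1 p2 =
      (1 / 4) * (q2 + 2 * a) * p1 ^ 2 - (1 / 4) * q1 * p1 * p2
        - (1 / 32) * q1 ^ 4 - (1 / 8) * (q2 ^ 2 - 2 * a * q2 + c + 4 * a ^ 2) * q1 ^ 2
        - m ^ 2 * (q2 + 2 * a) / (4 * q1 ^ 2)) :
    ∀ q1 q2 p1 p2 : ℝ, q1 ≠ 0 →
      (deriv (fun s => h1 q1 q2 s p2) p1) * (deriv (fun s => h2 s q2 p1 p2) q1)
        - (deriv (fun s => h1 s q2 p1 p2) q1) * (deriv (fun s => h2 q1 q2 s p2) p1)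
      + (deriv (fun s => h1 q1 q2 p1 s) p2) * (deriv (fun s => h2 q1 s p1 p2) q2)
        - (deriv (fun s => h1 q1 s p1 p2) q2) * (deriv (fun s => h2 q1 q2 p1 s) p2)
      = 0 := by
  intro q1 q2 p1 p2 hq1
  -- ∂h1/∂p1
  have e1 : (fun s => h1 q1 q2 s p2)
      = (fun s : ℝ => 0 * s ^ 4 + 0 * s ^ 3 + (1/2) * s ^ 2 + 0 * s +
          ((1/2) * p2 ^ 2 + q2 ^ 3 + (1/2) * q2 * q1 ^ 2 - (1/2) * a * q1 ^ 2
            + c * q2 - m ^ 2 / (2 * q1 ^ 2))) := by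
    funext s; rw [hh1]; ring
  -- ∂h1/∂q1
  have e2 : (fun s => h1 s q2 p1 p2)
      = (fun s : ℝ => 0 * s ^ 4 + 0 * s ^ 3 + ((1/2) * q2 - (1/2) * a) * s ^ 2 + 0 * s +
          ((1/2) * (p1 ^ 2 + p2 ^ 2) + q2 ^ 3 + c * q2) + (-(m ^ 2 / 2)) / s ^ 2) := by
    funext s; rw [hh1]; ring
  -- ∂h1/∂p2
  have e3 : (fun s => h1 q1 q2 p1 s)
      = (fun s : ℝ => 0 * s ^ 4 + 0 * s ^ 3 + (1/2) * s ^ 2 + 0 * s +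
          ((1/2) * p1 ^ 2 + q2 ^ 3 + (1/2) * q2 * q1 ^ 2 - (1/2) * a * q1 ^ 2
            + c * q2 - m ^ 2 / (2 * q1 ^ 2))) := by
    funext s; rw [hh1]; ring
  -- ∂h1/∂q2
  have e4 : (fun s => h1 q1 s p1 p2)
      = (fun s : ℝ => 0 * s ^ 4 + 1 * s ^ 3 + 0 * s ^ 2 + ((1/2) * q1 ^ 2 + c) * s +
          ((1/2) * (p1 ^ 2 + p2 ^ 2) - (1/2) * a * q1 ^ 2 - m ^ 2 / (2 * q1 ^ 2))) := by
    funext s; rw [hh1]; ring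
  -- ∂h2/∂q1
  have e5 : (fun s => h2 s q2 p1 p2)
      = (fun s : ℝ => (-(1/32)) * s ^ 4 + 0 * s ^ 3 +
          (-((1/8) * (q2 ^ 2 - 2 * a * q2 + c + 4 * a ^ 2))) * s ^ 2 +
          (-((1/4) * p1 * p2)) * s + (1/4) * (q2 + 2 * a) * p1 ^ 2 +
          (-(m ^ 2 * (q2 + 2 * a) / 4)) / s ^ 2) := by
    funext s; rw [hh2]; ring
  -- ∂h2/∂p1
  have e6 : (fun s => h2 q1 q2 s p2)
      = (fun s : ℝ => 0 * s ^ 4 + 0 * s ^ 3 + ((1/4) * (q2 + 2 * a)) * s ^ 2 +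
          (-((1/4) * q1 * p2)) * s +
          (-((1/32) * q1 ^ 4) - (1/8) * (q2 ^ 2 - 2 * a * q2 + c + 4 * a ^ 2) * q1 ^ 2
            - m ^ 2 * (q2 + 2 * a) / (4 * q1 ^ 2))) := by
    funext s; rw [hh2]; ring
  -- ∂h2/∂q2
  have e7 : (fun s => h2 q1 s p1 p2)
      = (fun s : ℝ => 0 * s ^ 4 + 0 * s ^ 3 + (-((1/8) * q1 ^ 2)) * s ^ 2 +
          ((1/4) * p1 ^ 2 + (1/4) * a * q1 ^ 2 - m ^ 2 / (4 * q1 ^ 2)) * s +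
          ((1/2) * a * p1 ^ 2 - (1/4) * q1 * p1 * p2 - (1/32) * q1 ^ 4
            - (1/8) * (c + 4 * a ^ 2) * q1 ^ 2 - m ^ 2 * 2 * a / (4 * q1 ^ 2))) := by
    funext s; rw [hh2]; ring
  -- ∂h2/∂p2
  have e8 : (fun s => h2 q1 q2 p1 s)
      = (fun s : ℝ => 0 * s ^ 4 + 0 * s ^ 3 + 0 * s ^ 2 + (-((1/4) * q1 * p1)) * s +
          ((1/4) * (q2 + 2 * a) * p1 ^ 2 - (1/32) * q1 ^ 4
            - (1/8) * (q2 ^ 2 - 2 * a * q2 + c + 4 * a ^ 2) * q1 ^ 2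
            - m ^ 2 * (q2 + 2 * a) / (4 * q1 ^ 2))) := by
    funext s; rw [hh2]; ring
  rw [e1, e2, e3, e4, e5, e6, e7, e8,
    (polyD _ _ _ _ _ p1).deriv, (fullD _ _ _ _ _ _ q1 hq1).deriv,
    (polyD _ _ _ _ _ p2).deriv, (polyD _ _ _ _ _ q2).deriv,
    (fullD _ _ _ _ _ _ q1 hq1).deriv, (polyD _ _ _ _ _ p1).deriv,
    (polyD _ _ _ _ _ q2).deriv, (polyD _ _ _ _ _ p2).deriv]
  field_simp
  ring
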